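/- Let p̃_tot(u, δ, x, w, ρ) = min(0, ρ − ρ_min) + max(0, ρ − ρ_max) + Σᵢ pᵢ(ρ), where each pᵢ(ρ) is a saturated droop power function (monotonically increasing, bounded, piecewise-affine in ρ) plus the constant load term. Then ρ ↦ p̃_tot(·, ρ) is continuous, monotonically increasing, and surjective onto ℝ. -/

import Mathlib

noncomputable def sat (a x b : ℝ) : ℝ := max a (min x b)

/-- The augmented total power function
`p̃tot(ρ) = min(0, ρ − ρmin) + max(0, ρ − ρmax) + Σᵢ sat aᵢ (uᵢ + χᵢρ) bᵢ + L`
(with `χᵢ ≥ 0`, `aᵢ ≤ bᵢ` and constant load term `L`) is continuous, monotone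
(non-decreasing) and surjective onto ℝ. -/
theorem ptot_continuous_monotone_surjective
    (n : ℕ) (a b u χ : Fin n → ℝ) (L ρmin ρmax : ℝ)
    (hab : ∀ i, a i ≤ b i) (hχ : ∀ i, 0 ≤ χ i) (hρ : ρmin ≤ ρmax) :
    Continuous (fun ρ : ℝ =>
      min 0 (ρ - ρmin) + max 0 (ρ - ρmax) + (∑ i, sat (a i) (u i + χ i * ρ) (b i)) + L) ∧
    Monotone (fun ρ : ℝ =>
      min 0 (ρ - ρmin) + max 0 (ρ - ρmax) + (∑ i, sat (a i) (u i + χ i * ρ) (b i)) + L) ∧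
    Function.Surjective (fun ρ : ℝ =>
      min 0 (ρ - ρmin) + max 0 (ρ - ρmax) + (∑ i, sat (a i) (u i + χ i * ρ) (b i)) + L) := by
  set f : ℝ → ℝ := fun ρ : ℝ =>
      min 0 (ρ - ρmin) + max 0 (ρ - ρmax) + (∑ i, sat (a i) (u i + χ i * ρ) (b i)) + L with hf
  have hcont : Continuous f := by
    apply Continuous.add
    apply Continuous.add
    apply Continuous.add
    · exact continuous_const.min (continuous_id.sub continuous_const)
    · exact continuous_const.max (continuous_id.sub continuous_const)
    · exact continuous_finset_sum _ fun i _ => by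
        unfold sat
        exact continuous_const.max ((continuous_const.add
          (continuous_const.mul continuous_id)).min continuous_const)
    · exact continuous_const
  have hmono : Monotone f := by
    intro x y hxy
    apply add_le_add_left
    apply add_le_add
    apply add_le_add
    · exact min_le_min le_rfl (by linarith)
    · exact max_le_max le_rfl (by linarith)
    · refine Finset.sum_le_sum fun i _ => ?_
      unfold sat
      have : u i + χ i * x ≤ u i + χ i * y := by nlinarith [hχ i]
      exact max_le_max le_rfl (min_le_min this le_rfl)
  refine ⟨hcont, hmono, ?_⟩
  have htop : Filter.Tendsto f Filter.atTop Filter.atTop := by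
    apply Filter.tendsto_atTop_mono' _
      (f₁ := fun ρ => (ρ - ρmax) + (∑ i, a i) + L)
    · filter_upwards [Filter.eventually_ge_atTop ρmin] with ρ hρmin
      have h1 : min 0 (ρ - ρmin) = 0 := min_eq_left (by linarith)
      have h2 : ρ - ρmax ≤ max 0 (ρ - ρmax) := le_max_right _ _
      have h3 : (∑ i, a i) ≤ ∑ i, sat (a i) (u i + χ i * ρ) (b i) :=
        Finset.sum_le_sum fun i _ => le_max_left _ _
      simp only [hf, h1]
      linarith
    · apply Filter.tendsto_atTop_add_const_right
      apply Filter.tendsto_atTop_add_const_right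
      exact Filter.tendsto_atTop_add_const_right _ _ Filter.tendsto_id
  have hbot : Filter.Tendsto f Filter.atBot Filter.atBot := by
    apply Filter.tendsto_atBot_mono' _
      (f₁ := fun ρ => (ρ - ρmin) + (∑ i, b i) + L)
    · filter_upwards [Filter.eventually_le_atBot ρmax] with ρ hρmax
      have h1 : max 0 (ρ - ρmax) = 0 := max_eq_left (by linarith)
      have h2 : min 0 (ρ - ρmin) ≤ ρ - ρmin := min_le_right _ _
      have h3 : (∑ i, sat (a i) (u i + χ i * ρ) (b i)) ≤ ∑ i, b i := by
        refine Finset.sum_le_sum fun i _ => ?_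
        exact max_le (hab i) (min_le_right _ _)
      simp only [hf, h1]
      linarith
    · apply Filter.tendsto_atBot_add_const_right
      apply Filter.tendsto_atBot_add_const_right
      exact Filter.tendsto_atBot_add_const_right _ _ Filter.tendsto_id
  intro y
  obtain ⟨x, hx⟩ := (hcont.surjective htop hbot) y
  exact ⟨x, hx⟩
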